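/- For H > 0, γ₀ ≥ 0, V > 0, T > 0 and B > 0, ∫₀ᵀ B·log₂(1 + γ₀/(H² + (−VT/2 + Vt)²)) dt = (4B/((ln 2)V))·[(VT/4)·ln(1 + γ₀/(H² + (VT/2)²)) + √(H² + γ₀)·arctan(VT/(2√(H² + γ₀))) − H·arctan(VT/(2H))]. -/

import Mathlib

open Real MeasureTheory intervalIntegral

lemma phi_deriv (c : ℝ) (hc : 0 < c) (x : ℝ) :
    HasDerivAt (fun y => y * Real.log (c + y ^ 2)
        + 2 * Real.sqrt c * Real.arctan (y / Real.sqrt c))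
      (Real.log (c + x ^ 2) + 2) x := by
  have hcx : 0 < c + x ^ 2 := by positivity
  have hsc : 0 < Real.sqrt c := Real.sqrt_pos.mpr hc
  have hsq : Real.sqrt c ^ 2 = c := Real.sq_sqrt hc.le
  have h1 : HasDerivAt (fun y : ℝ => c + y ^ 2) (2 * x) x := by
    simpa using ((hasDerivAt_pow 2 x).const_add c)
  have h2 : HasDerivAt (fun y => Real.log (c + y ^ 2)) (2 * x / (c + x ^ 2)) x :=
    h1.log hcx.ne'
  have h3 : HasDerivAt (fun y : ℝ => y * Real.log (c + y ^ 2))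
      (1 * Real.log (c + x ^ 2) + x * (2 * x / (c + x ^ 2))) x :=
    (hasDerivAt_id x).mul h2
  have h4 : HasDerivAt (fun y : ℝ => y / Real.sqrt c) (1 / Real.sqrt c) x := by
    simpa using (hasDerivAt_id x).div_const (Real.sqrt c)
  have h5 : HasDerivAt (fun y => Real.arctan (y / Real.sqrt c))
      ((1 / (1 + (x / Real.sqrt c) ^ 2)) * (1 / Real.sqrt c)) x :=
    by have := (Real.hasDerivAt_arctan (x / Real.sqrt c)).comp x h4; exact this
  have h6 := h3.add (h5.const_mul (2 * Real.sqrt c))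
  refine h6.congr_deriv ?_
  have hpos : 1 + (x / Real.sqrt c) ^ 2 ≠ 0 := by positivity
  field_simp
  rw [hsq]; ring

theorem stmt_15 (H γ₀ V T B : ℝ) (hH : 0 < H) (hγ : 0 ≤ γ₀) (hV : 0 < V)
    (hT : 0 < T) (hB : 0 < B) :
    ∫ t in (0:ℝ)..T, B * Real.logb 2 (1 + γ₀ / (H ^ 2 + (-(V * T) / 2 + V * t) ^ 2))
      = (4 * B / (Real.log 2 * V))
        * ((V * T / 4) * Real.log (1 + γ₀ / (H ^ 2 + (V * T / 2) ^ 2))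
          + Real.sqrt (H ^ 2 + γ₀) * Real.arctan (V * T / (2 * Real.sqrt (H ^ 2 + γ₀)))
          - H * Real.arctan (V * T / (2 * H))) := by
  set A : ℝ := H ^ 2 + γ₀ with hAdef
  set C : ℝ := H ^ 2 with hCdef
  have hA : 0 < A := by positivity
  have hC : 0 < C := by positivity
  have hl2 : Real.log 2 ≠ 0 := by
    have := Real.log_pos (by norm_num : (1:ℝ) < 2); linarith
  -- antiderivative
  set F : ℝ → ℝ := fun x => (x * Real.log (A + x ^ 2)
      + 2 * Real.sqrt A * Real.arctan (x / Real.sqrt A))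
      - (x * Real.log (C + x ^ 2) + 2 * Real.sqrt C * Real.arctan (x / Real.sqrt C))
    with hFdef
  have hF : ∀ x, HasDerivAt F (Real.log (A + x ^ 2) - Real.log (C + x ^ 2)) x := by
    intro x
    have := (phi_deriv A hA x).sub (phi_deriv C hC x)
    exact this.congr_deriv (by ring)
  set Φ : ℝ → ℝ := fun t => (B / (V * Real.log 2)) * F (-(V * T) / 2 + V * t) with hΦdef
  have key : ∀ t : ℝ, HasDerivAt Φ
      (B * Real.logb 2 (1 + γ₀ / (H ^ 2 + (-(V * T) / 2 + V * t) ^ 2))) t := by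
    intro t
    have hg : HasDerivAt (fun t : ℝ => -(V * T) / 2 + V * t) V t := by
      simpa using ((hasDerivAt_id t).const_mul V).const_add (-(V * T) / 2)
    set u : ℝ := -(V * T) / 2 + V * t with hu
    have h1 := ((hF u).comp t hg).const_mul (B / (V * Real.log 2))
    refine h1.congr_deriv ?_
    have hCu : (0:ℝ) < C + u ^ 2 := by positivity
    have harg : 1 + γ₀ / (H ^ 2 + u ^ 2) = (A + u ^ 2) / (C + u ^ 2) := by
      rw [hAdef, hCdef]; field_simp; ring
    rw [Real.logb.eq_1, harg, Real.log_div (by positivity) hCu.ne']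
    field_simp
  have hcont : Continuous fun t : ℝ =>
      B * Real.logb 2 (1 + γ₀ / (H ^ 2 + (-(V * T) / 2 + V * t) ^ 2)) := by
    have hd : ∀ t : ℝ, H ^ 2 + (-(V * T) / 2 + V * t) ^ 2 ≠ 0 := fun t => by positivity
    have h1 : Continuous fun t : ℝ => 1 + γ₀ / (H ^ 2 + (-(V * T) / 2 + V * t) ^ 2) :=
      continuous_const.add (continuous_const.div (by continuity) hd)
    have hne : ∀ t : ℝ, 1 + γ₀ / (H ^ 2 + (-(V * T) / 2 + V * t) ^ 2) ≠ 0 := fun t => by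
      have : 0 ≤ γ₀ / (H ^ 2 + (-(V * T) / 2 + V * t) ^ 2) := by positivity
      linarith
    exact (continuous_const.mul ((h1.log hne).div_const (Real.log 2)))
  have hint := intervalIntegral.integral_eq_sub_of_hasDerivAt
      (fun t _ => key t) (hcont.intervalIntegrable 0 T)
  rw [hint]
  -- evaluate
  have hgT : -(V * T) / 2 + V * T = V * T / 2 := by ring
  have hg0 : -(V * T) / 2 + V * 0 = -(V * T / 2) := by ring
  rw [hΦdef]
  simp only [hgT, hg0]
  have hFodd : F (-(V * T / 2)) = -F (V * T / 2) := by
    simp only [hFdef, neg_sq, neg_div, Real.arctan_neg]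
    ring
  rw [hFodd, hFdef]
  beta_reduce
  have hsC : Real.sqrt C = H := by rw [hCdef, Real.sqrt_sq hH.le]
  have hCa : (0:ℝ) < C + (V * T / 2) ^ 2 := by positivity
  have hlog : Real.log (A + (V * T / 2) ^ 2)
      = Real.log (1 + γ₀ / (C + (V * T / 2) ^ 2)) + Real.log (C + (V * T / 2) ^ 2) := by
    have harg : 1 + γ₀ / (C + (V * T / 2) ^ 2) = (A + (V * T / 2) ^ 2) / (C + (V * T / 2) ^ 2) := by
      rw [hAdef, hCdef]; field_simp; ring
    rw [harg, Real.log_div (by positivity) hCa.ne']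
    ring
  have hat1 : V * T / 2 / Real.sqrt A = V * T / (2 * Real.sqrt A) := by ring
  have hat2 : V * T / 2 / Real.sqrt C = V * T / (2 * H) := by rw [hsC]; ring
  rw [hlog, hat1, hat2, hsC]
  field_simp
  ring
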